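/- Let R be a principal ideal ring, let n ∈ R be nonzero, and let I ⊆ R[x₁,…,xₛ] be an ideal. Suppose G_n ⊆ R[x₁,…,xₛ] is a finite set of polynomials such that: (i) the image π_n(G_n) is a strong Gröbner basis of the image ideal π_n(I) ⊆ (R/nR)[x₁,…,xₛ]; and (ii) for every g ∈ G_n the leading coefficient lc(g) divides n and lc(g) ∉ nR (in particular g ≠ 0). Then G_n ∪ {n} is a strong Gröbner basis of the ideal I + n·R[x₁,…,xₛ]. -/

import Mathlib

open MvPolynomial

/-- The leading monomial (largest exponent vector of the support) of a multivariate
polynomial with respect to a monomial order. -/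
noncomputable def MonomialOrder.lm {σ R : Type*} [CommSemiring R] (m : MonomialOrder σ)
    (f : MvPolynomial σ R) : σ →₀ ℕ :=
  m.toSyn.symm (f.support.sup fun d => m.toSyn d)

/-- The leading coefficient of a multivariate polynomial with respect to a monomial order. -/
noncomputable def MonomialOrder.lc {σ R : Type*} [CommSemiring R] (m : MonomialOrder σ)
    (f : MvPolynomial σ R) : R :=
  f.coeff (m.lm f)

/-- `G` is a strong Gröbner basis of an ideal `I` w.r.t. the monomial order `m` if `G ⊆ I`
and for every nonzero `f ∈ I` there is a nonzero `g ∈ G` whose leading term divides the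
leading term of `f`, i.e. `lm g ≤ lm f` componentwise and `lc g ∣ lc f`. -/
def MonomialOrder.IsStrongGroebnerBasis {σ R : Type*} [CommSemiring R] (m : MonomialOrder σ)
    (G : Set (MvPolynomial σ R)) (I : Ideal (MvPolynomial σ R)) : Prop :=
  (∀ g ∈ G, g ∈ I) ∧
    ∀ f ∈ I, f ≠ 0 → ∃ g ∈ G, g ≠ 0 ∧ m.lm g ≤ m.lm f ∧ m.lc g ∣ m.lc f

section Aux

variable {σ R S : Type*} [CommSemiring R] [CommSemiring S] (m : MonomialOrder σ)

lemma MonomialOrder.lm_mem_support {f : MvPolynomial σ R} (hf : f ≠ 0) :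
    m.lm f ∈ f.support := by
  obtain ⟨b, hb, hb'⟩ :=
    Finset.exists_mem_eq_sup f.support (MvPolynomial.support_nonempty.2 hf)
      (fun d => m.toSyn d)
  have : m.lm f = b := by simp [MonomialOrder.lm, hb']
  rwa [this]

lemma MonomialOrder.lm_C (r : R) (hr : r ≠ 0) : m.lm (C r : MvPolynomial σ R) = 0 := by
  classical
  have : (C r : MvPolynomial σ R).support = {0} := by
    rw [MvPolynomial.C_apply, MvPolynomial.support_monomial, if_neg hr]
  simp [MonomialOrder.lm, this]

lemma MonomialOrder.lc_C (r : R) (hr : r ≠ 0) : m.lc (C r : MvPolynomial σ R) = r := by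
  simp [MonomialOrder.lc, m.lm_C r hr]

lemma MonomialOrder.lm_map (φ : R →+* S) {f : MvPolynomial σ R}
    (h : φ (m.lc f) ≠ 0) :
    m.lm (MvPolynomial.map φ f) = m.lm f ∧ m.lc (MvPolynomial.map φ f) = φ (m.lc f) := by
  have hf : f ≠ 0 := by
    rintro rfl
    simp [MonomialOrder.lc] at h
  have hmem : m.lm f ∈ (MvPolynomial.map φ f).support := by
    rw [MvPolynomial.mem_support_iff, MvPolynomial.coeff_map]
    exact h
  have h1 : ((MvPolynomial.map φ f).support.sup fun d => m.toSyn d) ≤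
      f.support.sup fun d => m.toSyn d :=
    Finset.sup_mono (MvPolynomial.support_map_subset _ _)
  have h2 : m.toSyn (m.lm f) ≤ (MvPolynomial.map φ f).support.sup fun d => m.toSyn d :=
    Finset.le_sup hmem
  have h3 : m.toSyn (m.lm f) = f.support.sup fun d => m.toSyn d := by
    simp [MonomialOrder.lm]
  have heq : ((MvPolynomial.map φ f).support.sup fun d => m.toSyn d) =
      f.support.sup fun d => m.toSyn d := le_antisymm h1 (h3 ▸ h2)
  constructor
  · simp [MonomialOrder.lm, heq]
  · have : m.lm (MvPolynomial.map φ f) = m.lm f := by simp [MonomialOrder.lm, heq]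
    rw [MonomialOrder.lc, this, MvPolynomial.coeff_map]
    rfl

end Aux


/-- Pulling back a strong Gröbner basis along the projection `R[x] → (R/nR)[x]`:
if `π_n(G)` is a strong Gröbner basis of `π_n(I)` and every `g ∈ G` has leading coefficient
dividing `n` but not lying in `nR`, then `G ∪ {n}` is a strong Gröbner basis of
`I + n·R[x]`. -/
theorem strongGroebnerBasis_of_quotient {σ R : Type*} [CommRing R] [IsPrincipalIdealRing R]
    [Finite σ] (m : MonomialOrder σ) (n : R) (hn : n ≠ 0)
    (I : Ideal (MvPolynomial σ R)) (G : Finset (MvPolynomial σ R))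
    (hGB : m.IsStrongGroebnerBasis
      ((fun f => MvPolynomial.map (Ideal.Quotient.mk (Ideal.span {n})) f) '' (G : Set _))
      (I.map (MvPolynomial.map (Ideal.Quotient.mk (Ideal.span {n})))))
    (hlc : ∀ g ∈ G, m.lc g ∣ n ∧ m.lc g ∉ Ideal.span ({n} : Set R)) :
    m.IsStrongGroebnerBasis ((G : Set (MvPolynomial σ R)) ∪ {C n})
      (I + Ideal.span {(C n : MvPolynomial σ R)}) := by
  set π : MvPolynomial σ R →+* MvPolynomial σ (R ⧸ Ideal.span ({n} : Set R)) :=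
    MvPolynomial.map (Ideal.Quotient.mk (Ideal.span {n}))
  have hker : RingHom.ker π = Ideal.span {(C n : MvPolynomial σ R)} := by
    rw [MvPolynomial.ker_map, Ideal.mk_ker, Ideal.map_span]
    simp
  have hCn : Ideal.span {(C n : MvPolynomial σ R)} ≤ I + Ideal.span {(C n : MvPolynomial σ R)} :=
    le_sup_right
  constructor
  · rintro g (hg | hg)
    · -- g ∈ G : use hGB.1
      have := hGB.1 (π g) ⟨g, hg, rfl⟩
      obtain ⟨y, hyI, hy⟩ := Ideal.mem_map_iff_of_surjective π
        (MvPolynomial.map_surjective _ Ideal.Quotient.mk_surjective) |>.1 this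
      have hk : g - y ∈ RingHom.ker π := by
        simp [RingHom.mem_ker, map_sub, hy]
      have : g = y + (g - y) := by ring
      rw [this]
      exact Ideal.add_mem _ (Ideal.mem_sup_left hyI) (hCn (hker ▸ hk))
    · rw [Set.mem_singleton_iff] at hg
      subst hg
      exact hCn (Ideal.subset_span rfl)
  · intro f hf hf0
    by_cases hlcf : m.lc f ∈ Ideal.span ({n} : Set R)
    · -- use C n
      refine ⟨C n, Or.inr rfl, ?_, ?_, ?_⟩
      · simp [hn]
      · rw [m.lm_C n hn]; exact zero_le
      · rw [m.lc_C n hn]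
        exact (Ideal.mem_span_singleton).1 hlcf
    · -- lc f not in (n): use the quotient Gröbner basis
      have hπf_lc : (Ideal.Quotient.mk (Ideal.span {n})) (m.lc f) ≠ 0 := by
        simpa [Ideal.Quotient.eq_zero_iff_mem] using hlcf
      obtain ⟨hlmf, hlcf'⟩ := m.lm_map (Ideal.Quotient.mk (Ideal.span {n})) hπf_lc
      have hπf0 : π f ≠ 0 := by
        intro h
        rw [MonomialOrder.lc] at hπf_lc
        apply hπf_lc
        rw [← MvPolynomial.coeff_map]
        change (π f).coeff (m.lm f) = 0
        simp [h]
      have hπfI : π f ∈ I.map π := by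
        obtain ⟨a, haI, b, hb, rfl⟩ := Submodule.mem_sup.1 hf
        have hπb : π b = 0 := by
          have : b ∈ RingHom.ker π := hker ▸ hb
          simpa [RingHom.mem_ker] using this
        rw [map_add, hπb, add_zero]
        exact Ideal.mem_map_of_mem _ haI
      obtain ⟨g', ⟨g, hgG, rfl⟩, hg'0, hlm, hlcd⟩ := hGB.2 (π f) hπfI hπf0
      obtain ⟨hgdvd, hgnot⟩ := hlc g hgG
      have hπg_lc : (Ideal.Quotient.mk (Ideal.span {n})) (m.lc g) ≠ 0 := by
        simpa [Ideal.Quotient.eq_zero_iff_mem] using hgnot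
      obtain ⟨hlmg, hlcg⟩ := m.lm_map (Ideal.Quotient.mk (Ideal.span {n})) hπg_lc
      refine ⟨g, Or.inl hgG, ?_, ?_, ?_⟩
      · rintro rfl
        simp [MonomialOrder.lc] at hπg_lc
      · rw [← hlmg, ← hlmf]; exact hlm
      · -- divisibility: mk (lc g) ∣ mk (lc f) and lc g ∣ n ⇒ lc g ∣ lc f
        rw [hlcg, hlcf'] at hlcd
        obtain ⟨c, hc⟩ := hlcd
        obtain ⟨a, rfl⟩ := Ideal.Quotient.mk_surjective c
        have : m.lc f - m.lc g * a ∈ Ideal.span ({n} : Set R) := by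
          rw [← Ideal.Quotient.eq_zero_iff_mem]
          simp only [map_sub, map_mul, hc]
          ring
        obtain ⟨b, hb⟩ := (Ideal.mem_span_singleton).1 this
        have : m.lc f = m.lc g * a + n * b := by
          rw [← hb]; ring
        rw [this]
        exact dvd_add (Dvd.intro a rfl) (Dvd.dvd.mul_right hgdvd b)
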